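/- Let $P = U \Sigma V^T$ be the SVD of $P = (\theta^*_{z^*_1},\dots,\theta^*_{z^*_n})$ with singular values $\sigma_1 \geq \dots \geq \sigma_k$ and left singular vectors $u_1,\dots,u_k$. If every cluster has size at least $\beta n / k$, then for all $j, l \in [k]$, $|\langle u_l, \theta^*_j \rangle| \leq \sigma_l \sqrt{k/(\beta n)}$. -/
import Mathlib


open Matrix Finset

theorem center_singular_vector_inner_product_bound (p n k : ℕ) (hn : 1 ≤ n)
    (β : ℝ) (hβ0 : 0 < β)
    (z : Fin n → Fin k) (θ : Fin k → Fin p → ℝ)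
    (hsize : ∀ j : Fin k,
      β * n / k ≤ ((Finset.univ.filter fun i => z i = j).card : ℝ))
    (P : Matrix (Fin p) (Fin n) ℝ) (hP : ∀ x i, P x i = θ (z i) x)
    (σ : Fin k → ℝ) (hσnn : ∀ l, 0 ≤ σ l)
    (hσmono : ∀ l l' : Fin k, l ≤ l' → σ l' ≤ σ l)
    (U : Matrix (Fin p) (Fin k) ℝ) (V : Matrix (Fin n) (Fin k) ℝ)
    (hUorth : Uᵀ * U = 1) (hVorth : Vᵀ * V = 1)
    (hSVD : P = U * Matrix.diagonal σ * Vᵀ)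
    -- the columns of V lie in the row space of P
    (hspan : ∀ j : Fin k, (fun i => V i j) ∈
      Submodule.span ℝ (Set.range fun x : Fin p => fun i => P x i)) :
    ∀ j l : Fin k, |∑ x, U x l * θ j x| ≤ σ l * Real.sqrt (k / (β * n)) := by
  intro j l
  have hkpos : (0:ℝ) < k := by exact_mod_cast j.pos
  have hnpos : (0:ℝ) < n := by exact_mod_cast hn
  have hd : (0:ℝ) < β * n / k := by positivity
  set S := Finset.univ.filter fun i => z i = j with hSdef
  have hScard : β * n / k ≤ (S.card : ℝ) := hsize j
  -- UᵀP = diagonal σ * Vᵀ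
  have hM : Uᵀ * P = Matrix.diagonal σ * Vᵀ := by
    rw [hSVD, ← Matrix.mul_assoc, ← Matrix.mul_assoc, hUorth, Matrix.one_mul]
  set c := ∑ x, U x l * θ j x with hc
  have hkey : ∀ i ∈ S, c = σ l * V i l := by
    intro i hi
    have hzi : z i = j := (Finset.mem_filter.mp hi).2
    have h1 := congrFun (congrFun hM l) i
    simp only [Matrix.mul_apply, Matrix.transpose_apply, Matrix.diagonal_mul] at h1
    have h2 : c = ∑ x, U x l * P x i := by
      rw [hc]
      exact Finset.sum_congr rfl fun x _ => by rw [hP, hzi]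
    rw [h2, h1]
    simp [Matrix.diagonal_apply]
  have hV1 : ∑ i, V i l * V i l = 1 := by
    have := congrFun (congrFun hVorth l) l
    simpa [Matrix.mul_apply, Matrix.transpose_apply, Matrix.one_apply] using this
  have hsum : (S.card : ℝ) * c^2 ≤ σ l^2 := by
    have h1 : (S.card:ℝ) * c^2 = ∑ i ∈ S, (σ l * V i l)^2 := by
      rw [Finset.sum_congr rfl fun i hi => by rw [← hkey i hi]]
      simp [mul_comm]
    have h2 : ∑ i ∈ S, (σ l * V i l)^2 ≤ ∑ i, (σ l * V i l)^2 :=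
      Finset.sum_le_sum_of_subset_of_nonneg (Finset.subset_univ _)
        (fun i _ _ => sq_nonneg _)
    have h3 : ∑ i, (σ l * V i l)^2 = σ l^2 := by
      simp_rw [mul_pow, ← Finset.mul_sum, sq]
      rw [hV1, mul_one]
    rw [h1]
    rw [h3] at h2
    exact h2
  have hcsq : c^2 ≤ σ l^2 * (k / (β * n)) := by
    have heq : σ l^2 * (k / (β * n)) = σ l^2 / (β * n / k) := by
      field_simp
    rw [heq, le_div_iff₀ hd]
    nlinarith [sq_nonneg c, hScard, hsum]
  calc |c| = Real.sqrt (c^2) := (Real.sqrt_sq_eq_abs c).symm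
    _ ≤ Real.sqrt (σ l^2 * (k / (β * n))) := Real.sqrt_le_sqrt hcsq
    _ = σ l * Real.sqrt (k / (β * n)) := by
        rw [Real.sqrt_mul (sq_nonneg _), Real.sqrt_sq (hσnn l)]
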